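/- Let J be a nonempty poset ideal in Hom(P,[n]). Consider the S-linear map ε : ⊕_{φ∈J} S·e_φ → S/B(J) from the free S-module with basis {e_φ : φ ∈ J}, sending e_φ to the residue class of m_{Γφ}. Then the kernel of ε is generated, as an S-module, by the following elements: (i) x_{p,i}·e_φ for φ ∈ J and (p,i) ∈ P×[n] such that x_{p,i}·m_{Γφ} ∈ B(J); and (ii) x_{p,ψ(p)}·e_φ − x_{p,φ(p)}·e_ψ for φ, ψ ∈ J and p ∈ P such that φ(p) < ψ(p) and φ(q) = ψ(q) for all q ≠ p. -/

import Mathlib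

set_option linter.unusedSectionVars false
open MvPolynomial

variable {P : Type*} [PartialOrder P] [Fintype P] [DecidableEq P]

noncomputable def mA (k : Type*) [CommRing k] {n : ℕ} (A : Finset (P × Fin n)) :
    MvPolynomial (P × Fin n) k :=
  ∏ a ∈ A, X a

def GammaF {n : ℕ} (φ : P → Fin n) : Finset (P × Fin n) :=
  Finset.univ.image fun p => (p, φ p)

noncomputable def BJ (k : Type*) [CommRing k] {n : ℕ} (J : Set (P → Fin n)) :
    Ideal (MvPolynomial (P × Fin n) k) :=
  Ideal.span
    ({m | ∃ ψ : P → Fin n, Monotone ψ ∧ ψ ∉ J ∧ m = mA k (GammaF ψ)} ∪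
      {m | ∃ (p q : P) (i j : Fin n), p < q ∧ j < i ∧ m = X (p, i) * X (q, j)})

namespace Stmt11
variable {n : ℕ}

noncomputable def Dg (φ : P → Fin n) : (P × Fin n) →₀ ℕ := ∑ p : P, Finsupp.single (p, φ p) 1

lemma Dg_apply (φ : P → Fin n) (q : P) (j : Fin n) :
    Dg φ (q, j) = if φ q = j then 1 else 0 := by
  classical
  rw [Dg, Finsupp.finset_sum_apply, Finset.sum_eq_single q]
  · simp [Finsupp.single_apply, Prod.ext_iff, eq_comm]
  · intro p _ hpq; simp [Finsupp.single_apply, Prod.ext_iff, Ne.symm hpq]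
  · simp

lemma Dg_self (φ : P → Fin n) (p : P) : Dg φ (p, φ p) = 1 := by simp [Dg_apply]

lemma Dg_ne (φ : P → Fin n) {p : P} {j : Fin n} (h : φ p ≠ j) : Dg φ (p, j) = 0 := by
  simp [Dg_apply, h]

lemma Dg_le_iff (φ : P → Fin n) (w : (P × Fin n) →₀ ℕ) :
    Dg φ ≤ w ↔ ∀ p, 1 ≤ w (p, φ p) := by
  constructor
  · intro h p; simpa [Dg_self] using h (p, φ p)
  · intro h a
    rcases a with ⟨q, j⟩
    rw [Dg_apply]
    split
    · next hq => subst hq; exact h q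
    · exact Nat.zero_le _

lemma Dg_pair (φ ψ : P → Fin n) (p : P) (h : ∀ q, q ≠ p → φ q = ψ q) :
    Dg φ + Finsupp.single (p, ψ p) 1 = Dg ψ + Finsupp.single (p, φ p) 1 := by
  classical
  have h1 : Dg φ = (∑ q ∈ Finset.univ.erase p, Finsupp.single (q, φ q) 1)
      + Finsupp.single (p, φ p) 1 := by
    rw [Dg, ← Finset.sum_erase_add _ _ (Finset.mem_univ p)]
  have h2 : Dg ψ = (∑ q ∈ Finset.univ.erase p, Finsupp.single (q, φ q) 1)
      + Finsupp.single (p, ψ p) 1 := by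
    rw [Dg, ← Finset.sum_erase_add _ _ (Finset.mem_univ p)]
    congr 1
    exact Finset.sum_congr rfl fun q hq => by rw [h q (Finset.ne_of_mem_erase hq)]
  rw [h1, h2]; abel

lemma prod_X_eq_monomial (k : Type*) [CommRing k] (A : Finset (P × Fin n)) :
    (∏ a ∈ A, (X a : MvPolynomial (P × Fin n) k))
      = monomial (∑ a ∈ A, Finsupp.single a 1) 1 := by
  classical
  induction A using Finset.induction with
  | empty => simp
  | insert a s hni ih =>
    rw [Finset.prod_insert hni, Finset.sum_insert hni, ih]
    rw [X, monomial_mul, one_mul]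

lemma mA_eq (k : Type*) [CommRing k] (φ : P → Fin n) :
    mA k (GammaF φ) = monomial (Dg φ) (1 : k) := by
  rw [mA, prod_X_eq_monomial, GammaF, Finset.sum_image, Dg]
  intro p _ q _ h
  exact (Prod.ext_iff.1 h).1

def BgenSet (J : Set (P → Fin n)) : Set ((P × Fin n) →₀ ℕ) :=
  {d | ∃ ψ : P → Fin n, Monotone ψ ∧ ψ ∉ J ∧ d = Dg ψ} ∪
    {d | ∃ (p q : P) (i j : Fin n), p < q ∧ j < i ∧
      d = Finsupp.single (p, i) 1 + Finsupp.single (q, j) 1}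

lemma BJ_eq_span (k : Type*) [CommRing k] (J : Set (P → Fin n)) :
    BJ k J = Ideal.span ((fun d => monomial d (1 : k)) '' BgenSet J) := by
  rw [BJ]
  congr 1
  rw [BgenSet, Set.image_union]
  congr 1
  · ext m
    constructor
    · rintro ⟨ψ, h1, h2, rfl⟩
      exact ⟨Dg ψ, ⟨ψ, h1, h2, rfl⟩, (mA_eq k ψ).symm⟩
    · rintro ⟨d, ⟨ψ, h1, h2, rfl⟩, rfl⟩
      exact ⟨ψ, h1, h2, (mA_eq k ψ).symm⟩
  · ext m
    constructor
    · rintro ⟨p, q, i, j, h1, h2, rfl⟩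
      exact ⟨_, ⟨p, q, i, j, h1, h2, rfl⟩, by rw [X, X, monomial_mul, one_mul]⟩
    · rintro ⟨d, ⟨p, q, i, j, h1, h2, rfl⟩, rfl⟩
      exact ⟨p, q, i, j, h1, h2, by rw [X, X, monomial_mul, one_mul]⟩

lemma mem_BJ_iff (k : Type*) [Field k] (J : Set (P → Fin n))
    (f : MvPolynomial (P × Fin n) k) :
    f ∈ BJ k J ↔ ∀ w ∈ f.support, ∃ d ∈ BgenSet J, d ≤ w := by
  rw [BJ_eq_span, mem_ideal_span_monomial_image]

lemma monomial_mem_BJ (k : Type*) [Field k] (J : Set (P → Fin n))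
    {w : (P × Fin n) →₀ ℕ} (c : k)
    (h : ∃ d ∈ BgenSet J, d ≤ w) : monomial w c ∈ BJ k J := by
  classical
  rw [mem_BJ_iff]
  intro v hv
  rw [MvPolynomial.support_monomial] at hv
  split at hv
  · exact absurd hv (Finset.notMem_empty v)
  · rw [Finset.mem_singleton] at hv; subst hv; exact h

lemma monomial_one_mem_BJ_iff (k : Type*) [Field k] (J : Set (P → Fin n))
    (w : (P × Fin n) →₀ ℕ) :
    monomial w (1 : k) ∈ BJ k J ↔ ∃ d ∈ BgenSet J, d ≤ w := by
  classical
  rw [mem_BJ_iff]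
  constructor
  · intro h
    refine h w ?_
    rw [MvPolynomial.support_monomial]
    simp
  · intro h v hv
    rw [MvPolynomial.support_monomial] at hv
    split at hv
    · exact absurd hv (Finset.notMem_empty v)
    · rw [Finset.mem_singleton] at hv; subst hv; exact h



variable (k : Type*) [Field k] (J : Set (P → Fin n))

def Gset : Set (↥J →₀ MvPolynomial (P × Fin n) k) :=
  {v | ∃ (φ : ↥J) (p : P) (i : Fin n),
      X (p, i) * mA k (GammaF φ.1) ∈ BJ k J ∧ v = Finsupp.single φ (X (p, i))} ∪
    {v | ∃ (φ ψ : ↥J) (p : P),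
      φ.1 p < ψ.1 p ∧ (∀ q : P, q ≠ p → φ.1 q = ψ.1 q) ∧
      v = Finsupp.single φ (X (p, ψ.1 p)) - Finsupp.single ψ (X (p, φ.1 p))}

noncomputable def GS : Submodule (MvPolynomial (P × Fin n) k) (↥J →₀ MvPolynomial (P × Fin n) k) :=
  Submodule.span _ (Gset k J)

lemma X_mul_mA (φ : P → Fin n) (a : P × Fin n) :
    X a * mA k (GammaF φ) = monomial (Finsupp.single a 1 + Dg φ) (1 : k) := by
  rw [mA_eq, X, monomial_mul, one_mul]

lemma add_single_le (φ : P → Fin n) (w : (P × Fin n) →₀ ℕ) (p : P) (j : Fin n)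
    (h : Dg φ ≤ w) (hj : φ p ≠ j) (hw : 1 ≤ w (p, j)) :
    Dg φ + Finsupp.single (p, j) 1 ≤ w := by
  classical
  rw [Finsupp.le_def]
  intro a
  rw [Finsupp.add_apply, Finsupp.single_apply]
  by_cases ha : ((p, j) : P × Fin n) = a
  · subst ha
    rw [Dg_ne φ hj, if_pos rfl]
    exact hw
  · rw [if_neg ha, add_zero]
    exact h a

lemma sub_add_single (w d : (P × Fin n) →₀ ℕ) (a : P × Fin n)
    (h : d + Finsupp.single a 1 ≤ w) :
    w - (d + Finsupp.single a 1) + Finsupp.single a 1 = w - d := by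
  rw [tsub_add_eq_tsub_tsub]
  exact tsub_add_cancel_of_le (le_tsub_of_add_le_left h)

lemma G1_mem (φ : ↥J) (a : P × Fin n) (u : (P × Fin n) →₀ ℕ) (c : k)
    (hu : 1 ≤ u a) (hB : ∃ d ∈ BgenSet J, d ≤ Finsupp.single a 1 + Dg φ.1) :
    Finsupp.single φ (monomial u c) ∈ GS k J := by
  have hgen : Finsupp.single φ (X a) ∈ Gset k J := by
    left
    exact ⟨φ, a.1, a.2, by rw [Prod.mk.eta, X_mul_mA]; exact monomial_mem_BJ k J 1 hB, by rw [Prod.mk.eta]⟩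
  have : Finsupp.single φ (monomial u c)
      = (monomial (u - Finsupp.single a 1) c) • Finsupp.single φ (X a) := by
    rw [Finsupp.smul_single, smul_eq_mul, X, monomial_mul, mul_one,
      tsub_add_cancel_of_le (Finsupp.single_le_iff.2 hu)]
  rw [this]
  exact Submodule.smul_mem _ _ (Submodule.subset_span hgen)

lemma G2_gen (φ ψ : ↥J) (p : P) (hne : φ.1 p ≠ ψ.1 p) (hq : ∀ q : P, q ≠ p → φ.1 q = ψ.1 q) :
    Finsupp.single φ (X (p, ψ.1 p)) - Finsupp.single ψ (X (p, φ.1 p)) ∈ GS k J := by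
  rcases lt_or_gt_of_ne hne with h | h
  · exact Submodule.subset_span (Or.inr ⟨φ, ψ, p, h, hq, rfl⟩)
  · have : Finsupp.single φ (X (p, ψ.1 p) : MvPolynomial (P × Fin n) k) - Finsupp.single ψ (X (p, φ.1 p))
        = -(Finsupp.single ψ (X (p, φ.1 p) : MvPolynomial (P × Fin n) k) - Finsupp.single φ (X (p, ψ.1 p))) := by abel
    rw [this]
    exact neg_mem (Submodule.subset_span
      (Or.inr ⟨ψ, φ, p, h, fun q hqp => (hq q hqp).symm, rfl⟩))

lemma G2_step (φ ψ : ↥J) (p : P) (hne : φ.1 p ≠ ψ.1 p) (hq : ∀ q : P, q ≠ p → φ.1 q = ψ.1 q)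
    (w : (P × Fin n) →₀ ℕ) (c : k) (hφ : Dg φ.1 ≤ w) (hψp : 1 ≤ w (p, ψ.1 p)) :
    Finsupp.single φ (monomial (w - Dg φ.1) c) - Finsupp.single ψ (monomial (w - Dg ψ.1) c)
      ∈ GS k J := by
  have hD : Dg φ.1 + Finsupp.single (p, ψ.1 p) 1 ≤ w :=
    add_single_le φ.1 w p (ψ.1 p) hφ hne hψp
  have hpair := Dg_pair φ.1 ψ.1 p hq
  have hD' : Dg ψ.1 + Finsupp.single (p, φ.1 p) 1 ≤ w := hpair ▸ hD
  have key : Finsupp.single φ (monomial (w - Dg φ.1) c) - Finsupp.single ψ (monomial (w - Dg ψ.1) c)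
      = (monomial (w - (Dg φ.1 + Finsupp.single (p, ψ.1 p) 1)) c) •
        (Finsupp.single φ (X (p, ψ.1 p)) - Finsupp.single ψ (X (p, φ.1 p))) := by
    rw [smul_sub, Finsupp.smul_single, Finsupp.smul_single, smul_eq_mul, smul_eq_mul,
      X, X, monomial_mul, monomial_mul, mul_one]
    have e1 : w - (Dg φ.1 + Finsupp.single (p, ψ.1 p) 1) + Finsupp.single (p, ψ.1 p) 1
        = w - Dg φ.1 := sub_add_single w (Dg φ.1) _ hD
    have e2 : w - (Dg φ.1 + Finsupp.single (p, ψ.1 p) 1) + Finsupp.single (p, φ.1 p) 1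
        = w - Dg ψ.1 := by rw [hpair]; exact sub_add_single w (Dg ψ.1) _ hD'
    rw [e1, e2]
  rw [key]
  exact Submodule.smul_mem _ _ (G2_gen k J φ ψ p hne hq)

lemma Dg_le_of_pair (φ ψ : P → Fin n) (p : P) (hq : ∀ q : P, q ≠ p → φ q = ψ q)
    (w : (P × Fin n) →₀ ℕ) (hφ : Dg φ ≤ w) (hψp : 1 ≤ w (p, ψ p)) : Dg ψ ≤ w := by
  rw [Dg_le_iff]
  intro q
  by_cases hqp : q = p
  · subst hqp; exact hψp
  · rw [← hq q hqp]
    exact (Dg_le_iff φ w).1 hφ q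


lemma pair_le (a b : P × Fin n) (hab : a ≠ b) (w : (P × Fin n) →₀ ℕ)
    (ha : 1 ≤ w a) (hb : 1 ≤ w b) :
    Finsupp.single a 1 + Finsupp.single b 1 ≤ w := by
  classical
  rw [Finsupp.le_def]
  intro x
  rw [Finsupp.add_apply, Finsupp.single_apply, Finsupp.single_apply]
  by_cases hxa : a = x
  · subst hxa
    rw [if_pos rfl, if_neg (fun h => hab h.symm)]
    simpa using ha
  · rw [if_neg hxa, zero_add]
    by_cases hxb : b = x
    · subst hxb; rw [if_pos rfl]; exact hb
    · rw [if_neg hxb]; exact Nat.zero_le _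

/-- If `w` admits no quadratic violation, every selection through `w` is monotone. -/
lemma sel_monotone (w : (P × Fin n) →₀ ℕ)
    (hquad : ∀ p q : P, ∀ i j : Fin n, p < q → j < i → ¬(1 ≤ w (p, i) ∧ 1 ≤ w (q, j)))
    (χ : P → Fin n) (hχ : ∀ p, 1 ≤ w (p, χ p)) : Monotone χ := by
  intro p q hpq
  rcases eq_or_lt_of_le hpq with h | h
  · subst h; exact le_rfl
  · by_contra hc
    push_neg at hc
    exact hquad p q (χ p) (χ q) h hc ⟨hχ p, hχ q⟩

lemma goodW_quadfree {w : (P × Fin n) →₀ ℕ} (hgood : ¬∃ d ∈ BgenSet J, d ≤ w) :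
    ∀ p q : P, ∀ i j : Fin n, p < q → j < i → ¬(1 ≤ w (p, i) ∧ 1 ≤ w (q, j)) := by
  intro p q i j hpq hji ⟨h1, h2⟩
  refine hgood ⟨Finsupp.single (p, i) 1 + Finsupp.single (q, j) 1,
    Or.inr ⟨p, q, i, j, hpq, hji, rfl⟩, ?_⟩
  exact pair_le _ _ (by simp [Prod.ext_iff]; intro h; exact absurd h (ne_of_lt hpq)) w h1 h2

lemma goodW_sel_memJ {w : (P × Fin n) →₀ ℕ} (hgood : ¬∃ d ∈ BgenSet J, d ≤ w)
    (χ : P → Fin n) (hχ : ∀ p, 1 ≤ w (p, χ p)) : χ ∈ J := by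
  by_contra hc
  exact hgood ⟨Dg χ, Or.inl ⟨χ, sel_monotone w (goodW_quadfree J hgood) χ hχ, hc, rfl⟩,
    (Dg_le_iff χ w).2 hχ⟩

/-- Walk lemma, connected case: if `w` is a good degree, any two basis elements of the
`w`-layer differ by an element of the span of the generators. -/
lemma walkB (w : (P × Fin n) →₀ ℕ) (hgood : ¬∃ d ∈ BgenSet J, d ≤ w) (c : k)
    (φ ψ : ↥J) (hφ : Dg φ.1 ≤ w) (hψ : Dg ψ.1 ≤ w) :
    Finsupp.single φ (monomial (w - Dg φ.1) c) - Finsupp.single ψ (monomial (w - Dg ψ.1) c)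
      ∈ GS k J := by
  classical
  suffices H : ∀ m : ℕ, ∀ φ ψ : ↥J, Dg φ.1 ≤ w → Dg ψ.1 ≤ w →
      (Finset.univ.filter fun p => φ.1 p ≠ ψ.1 p).card ≤ m →
      Finsupp.single φ (monomial (w - Dg φ.1) c) - Finsupp.single ψ (monomial (w - Dg ψ.1) c)
        ∈ GS k J by
    exact H _ φ ψ hφ hψ le_rfl
  intro m
  induction m with
  | zero =>
    intro φ ψ hφ hψ hcard
    have : φ = ψ := by
      refine Subtype.ext (funext fun p => ?_)
      by_contra hp
      have : p ∈ Finset.univ.filter fun p => φ.1 p ≠ ψ.1 p := by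
        simp [hp]
      rw [Finset.card_eq_zero.1 (Nat.le_zero.1 hcard)] at this
      simpa using this
    rw [this, sub_self]
    exact zero_mem _
  | succ m ih =>
    intro φ ψ hφ hψ hcard
    by_cases hfp : φ.1 = ψ.1
    · have : φ = ψ := Subtype.ext hfp
      rw [this, sub_self]; exact zero_mem _
    · obtain ⟨p, hp⟩ := Function.ne_iff.1 hfp
      set χ : P → Fin n := Function.update φ.1 p (ψ.1 p) with hχdef
      have hχsel : ∀ q, 1 ≤ w (q, χ q) := by
        intro q
        by_cases hq : q = p
        · subst hq
          rw [hχdef, Function.update_self]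
          exact (Dg_le_iff ψ.1 w).1 hψ q
        · rw [hχdef, Function.update_of_ne hq]
          exact (Dg_le_iff φ.1 w).1 hφ q
      have hχJ : χ ∈ J := goodW_sel_memJ J hgood χ hχsel
      have hχw : Dg χ ≤ w := (Dg_le_iff χ w).2 hχsel
      set χ' : ↥J := ⟨χ, hχJ⟩ with hχ'def
      have step1 : Finsupp.single φ (monomial (w - Dg φ.1) c)
          - Finsupp.single χ' (monomial (w - Dg χ'.1) c) ∈ GS k J := by
        refine G2_step k J φ χ' p ?_ ?_ w c hφ ?_
        · rw [hχ'def]; simpa [hχdef] using hp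
        · intro q hq; rw [hχ'def]; simp [hχdef, Function.update_of_ne hq]
        · have : χ'.1 p = ψ.1 p := by rw [hχ'def]; simp [hχdef]
          rw [this]
          exact (Dg_le_iff ψ.1 w).1 hψ p
      have step2 : Finsupp.single χ' (monomial (w - Dg χ'.1) c)
          - Finsupp.single ψ (monomial (w - Dg ψ.1) c) ∈ GS k J := by
        refine ih χ' ψ hχw hψ ?_
        have hsub : (Finset.univ.filter fun q => χ'.1 q ≠ ψ.1 q)
            ⊆ (Finset.univ.filter fun q => φ.1 q ≠ ψ.1 q).erase p := by
          intro q hq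
          rw [Finset.mem_filter] at hq
          have hqp : q ≠ p := by
            intro h; subst h
            exact hq.2 (by rw [hχ'def]; simp [hχdef])
          rw [Finset.mem_erase, Finset.mem_filter]
          refine ⟨hqp, Finset.mem_univ q, ?_⟩
          have : χ'.1 q = φ.1 q := by rw [hχ'def]; simp [hχdef, Function.update_of_ne hqp]
          rw [← this]; exact hq.2
        have hpmem : p ∈ Finset.univ.filter fun q => φ.1 q ≠ ψ.1 q := by simp [hp]
        calc (Finset.univ.filter fun q => χ'.1 q ≠ ψ.1 q).card
            ≤ ((Finset.univ.filter fun q => φ.1 q ≠ ψ.1 q).erase p).card :=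
              Finset.card_le_card hsub
          _ = (Finset.univ.filter fun q => φ.1 q ≠ ψ.1 q).card - 1 :=
              Finset.card_erase_of_mem hpmem
          _ ≤ m := by omega
      have := add_mem step1 step2
      rwa [sub_add_sub_cancel] at this

lemma Dg_update_le (φ : P → Fin n) (p : P) (j : Fin n) :
    Dg (Function.update φ p j) ≤ Finsupp.single (p, j) 1 + Dg φ := by
  classical
  have hpair := Dg_pair (Function.update φ p j) φ p
    (fun q hq => by rw [Function.update_of_ne hq])
  have h1 : Dg (Function.update φ p j)
      ≤ Dg (Function.update φ p j) + Finsupp.single (p, φ p) 1 := le_add_of_nonneg_right (by positivity)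
  calc Dg (Function.update φ p j)
      ≤ Dg (Function.update φ p j) + Finsupp.single (p, φ p) 1 := h1
    _ = Dg φ + Finsupp.single (p, Function.update φ p j p) 1 := hpair
    _ = Finsupp.single (p, j) 1 + Dg φ := by rw [Function.update_self, add_comm]

/-- Walk lemma, dead-end case: if `w` is quad-free and supports a selection `χ0 ∉ J`,
then every basis element of the `w`-layer lies in the span of the generators. -/
lemma walkA (w : (P × Fin n) →₀ ℕ)
    (hquad : ∀ p q : P, ∀ i j : Fin n, p < q → j < i → ¬(1 ≤ w (p, i) ∧ 1 ≤ w (q, j)))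
    (c : k) (χ0 : P → Fin n) (hχ0 : ∀ p, 1 ≤ w (p, χ0 p)) (hχ0J : χ0 ∉ J)
    (φ : ↥J) (hφ : Dg φ.1 ≤ w) :
    Finsupp.single φ (monomial (w - Dg φ.1) c) ∈ GS k J := by
  classical
  suffices H : ∀ m : ℕ, ∀ φ : ↥J, Dg φ.1 ≤ w →
      (Finset.univ.filter fun p => φ.1 p ≠ χ0 p).card ≤ m →
      Finsupp.single φ (monomial (w - Dg φ.1) c) ∈ GS k J by
    exact H _ φ hφ le_rfl
  intro m
  induction m with
  | zero =>
    intro φ hφ hcard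
    exfalso
    apply hχ0J
    have : φ.1 = χ0 := by
      funext p
      by_contra hp
      have hmem : p ∈ Finset.univ.filter fun p => φ.1 p ≠ χ0 p := by simp [hp]
      rw [Finset.card_eq_zero.1 (Nat.le_zero.1 hcard)] at hmem
      simp at hmem
    rw [← this]; exact φ.2
  | succ m ih =>
    intro φ hφ hcard
    by_cases hfp : φ.1 = χ0
    · exact absurd (hfp ▸ φ.2) hχ0J
    obtain ⟨p, hp⟩ := Function.ne_iff.1 hfp
    set χ : P → Fin n := Function.update φ.1 p (χ0 p) with hχdef
    have hχsel : ∀ q, 1 ≤ w (q, χ q) := by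
      intro q
      by_cases hq : q = p
      · subst hq; rw [hχdef, Function.update_self]; exact hχ0 q
      · rw [hχdef, Function.update_of_ne hq]
        exact (Dg_le_iff φ.1 w).1 hφ q
    have hχmono : Monotone χ := sel_monotone w hquad χ hχsel
    have hχw : Dg χ ≤ w := (Dg_le_iff χ w).2 hχsel
    by_cases hχJ : χ ∈ J
    · set χ' : ↥J := ⟨χ, hχJ⟩ with hχ'def
      have step1 : Finsupp.single φ (monomial (w - Dg φ.1) c)
          - Finsupp.single χ' (monomial (w - Dg χ'.1) c) ∈ GS k J := by
        refine G2_step k J φ χ' p ?_ ?_ w c hφ ?_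
        · rw [hχ'def]; simpa [hχdef] using hp
        · intro q hq; rw [hχ'def]; simp [hχdef, Function.update_of_ne hq]
        · have : χ'.1 p = χ0 p := by rw [hχ'def]; simp [hχdef]
          rw [this]; exact hχ0 p
      have step2 : Finsupp.single χ' (monomial (w - Dg χ'.1) c) ∈ GS k J := by
        refine ih χ' hχw ?_
        have hsub : (Finset.univ.filter fun q => χ'.1 q ≠ χ0 q)
            ⊆ (Finset.univ.filter fun q => φ.1 q ≠ χ0 q).erase p := by
          intro q hq
          rw [Finset.mem_filter] at hq
          have hqp : q ≠ p := by
            intro h; subst h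
            exact hq.2 (by rw [hχ'def]; simp [hχdef])
          rw [Finset.mem_erase, Finset.mem_filter]
          refine ⟨hqp, Finset.mem_univ q, ?_⟩
          have : χ'.1 q = φ.1 q := by rw [hχ'def]; simp [hχdef, Function.update_of_ne hqp]
          rw [← this]; exact hq.2
        have hpmem : p ∈ Finset.univ.filter fun q => φ.1 q ≠ χ0 q := by simp [hp]
        calc (Finset.univ.filter fun q => χ'.1 q ≠ χ0 q).card
            ≤ ((Finset.univ.filter fun q => φ.1 q ≠ χ0 q).erase p).card :=
              Finset.card_le_card hsub
          _ = (Finset.univ.filter fun q => φ.1 q ≠ χ0 q).card - 1 :=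
              Finset.card_erase_of_mem hpmem
          _ ≤ m := by omega
      have := add_mem (sub_mem step1 (zero_mem _) : _) step2
      have h2 := add_mem step1 step2
      rwa [sub_add_cancel] at h2
    · -- χ ∉ J : direct type-(i) generator
      refine G1_mem k J φ (p, χ0 p) (w - Dg φ.1) c ?_ ?_
      · rw [Finsupp.tsub_apply, Dg_ne φ.1 hp]
        simpa using hχ0 p
      · exact ⟨Dg χ, Or.inl ⟨χ, hχmono, hχJ, rfl⟩, by
          rw [hχdef]; exact Dg_update_le φ.1 p (χ0 p)⟩

lemma u_pos (φ : P → Fin n) (w : (P × Fin n) →₀ ℕ) {a : P × Fin n}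
    (ha : Dg φ a = 0) (hw : 1 ≤ w a) : 1 ≤ (w - Dg φ) a := by
  rw [Finsupp.tsub_apply, ha]
  simpa using hw

lemma single_add_single_le_single_add_Dg (φ : P → Fin n) (a b : P × Fin n)
    (hb : Dg φ b = 1) :
    Finsupp.single a 1 + Finsupp.single b 1 ≤ Finsupp.single a 1 + Dg φ :=
  add_le_add le_rfl (Finsupp.single_le_iff.2 (le_of_eq hb.symm))

/-- Dead layer lemma: if `w` is a degree lying in `B(J)`, then each `w`-layer basis
element is in the span of the generators. -/
lemma L1 (hJ1 : ∀ φ ∈ J, Monotone φ)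
    (hJ2 : ∀ φ ∈ J, ∀ ψ : P → Fin n, Monotone ψ → ψ ≤ φ → ψ ∈ J)
    (w : (P × Fin n) →₀ ℕ) (hw : ∃ d ∈ BgenSet J, d ≤ w) (c : k)
    (φ : ↥J) (hφ : Dg φ.1 ≤ w) :
    Finsupp.single φ (monomial (w - Dg φ.1) c) ∈ GS k J := by
  classical
  by_cases hquadex : ∃ p q : P, ∃ i j : Fin n, p < q ∧ j < i ∧ 1 ≤ w (p, i) ∧ 1 ≤ w (q, j)
  case neg =>
    -- no quadratic violation inside w, so the Bgen witness is a graph Dg χ0, χ0 ∉ J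
    have hquad : ∀ p q : P, ∀ i j : Fin n, p < q → j < i → ¬(1 ≤ w (p, i) ∧ 1 ≤ w (q, j)) := by
      intro p q i j h1 h2 h3
      exact hquadex ⟨p, q, i, j, h1, h2, h3.1, h3.2⟩
    obtain ⟨d, hd, hdw⟩ := hw
    rcases hd with ⟨χ0, hmono, hχ0J, rfl⟩ | ⟨p, q, i, j, hpq, hji, rfl⟩
    · exact walkA k J w hquad c χ0 (fun p => (Dg_le_iff χ0 w).1 hdw p) hχ0J φ hφ
    · exfalso
      refine hquad p q i j hpq hji ⟨?_, ?_⟩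
      · exact Finsupp.single_le_iff.1 (le_trans (le_add_of_nonneg_right (by positivity)) hdw)
      · exact Finsupp.single_le_iff.1 (le_trans (le_add_of_nonneg_left (by positivity)) hdw)
  case pos =>
    obtain ⟨p, q, i, j, hpq, hji, hwpi, hwqj⟩ := hquadex
    have hmonoφ : Monotone φ.1 := hJ1 φ.1 φ.2
    by_cases hq : φ.1 q = j
    · -- (q,j) is in the graph of φ; then (p,i) is not, and x_{p,i} kills e_φ
      have hpne : φ.1 p ≠ i := by
        intro h
        have := hmonoφ (le_of_lt hpq)
        rw [h, hq] at this
        exact absurd hji (not_lt.2 this)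
      refine G1_mem k J φ (p, i) (w - Dg φ.1) c (u_pos φ.1 w (Dg_ne φ.1 hpne) hwpi) ?_
      refine ⟨Finsupp.single (p, i) 1 + Finsupp.single (q, j) 1,
        Or.inr ⟨p, q, i, j, hpq, hji, rfl⟩, ?_⟩
      exact single_add_single_le_single_add_Dg φ.1 _ _ (by rw [← hq]; exact Dg_self φ.1 q)
    by_cases hpe : φ.1 p = i
    · have hqne : φ.1 q ≠ j := hq
      refine G1_mem k J φ (q, j) (w - Dg φ.1) c (u_pos φ.1 w (Dg_ne φ.1 hqne) hwqj) ?_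
      refine ⟨Finsupp.single (p, i) 1 + Finsupp.single (q, j) 1,
        Or.inr ⟨p, q, i, j, hpq, hji, rfl⟩, ?_⟩
      rw [add_comm (Finsupp.single (p, i) 1)]
      exact single_add_single_le_single_add_Dg φ.1 _ _ (by rw [← hpe]; exact Dg_self φ.1 p)
    -- now φ p ≠ i and φ q ≠ j, and both (p,i), (q,j) are in the support of u
    by_cases hi : φ.1 q < i
    · refine G1_mem k J φ (p, i) (w - Dg φ.1) c (u_pos φ.1 w (Dg_ne φ.1 hpe) hwpi) ?_
      exact ⟨Finsupp.single (p, i) 1 + Finsupp.single (q, φ.1 q) 1,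
        Or.inr ⟨p, q, i, φ.1 q, hpq, hi, rfl⟩,
        single_add_single_le_single_add_Dg φ.1 _ _ (Dg_self φ.1 q)⟩
    by_cases hj : ∃ r : P, r < q ∧ j < φ.1 r
    · obtain ⟨r, hrq, hjr⟩ := hj
      refine G1_mem k J φ (q, j) (w - Dg φ.1) c (u_pos φ.1 w (Dg_ne φ.1 hq) hwqj) ?_
      refine ⟨Finsupp.single (r, φ.1 r) 1 + Finsupp.single (q, j) 1,
        Or.inr ⟨r, q, φ.1 r, j, hrq, hjr, rfl⟩, ?_⟩
      rw [add_comm (Finsupp.single (r, φ.1 r) 1)]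
      exact single_add_single_le_single_add_Dg φ.1 _ _ (Dg_self φ.1 r)
    -- final case: i ≤ φ q, and φ r ≤ j for all r < q.  Move φ down at q to j.
    push_neg at hi hj
    have hjφq : j < φ.1 q := lt_of_lt_of_le hji hi
    set ψf : P → Fin n := Function.update φ.1 q j with hψdef
    have hψmono : Monotone ψf := by
      intro r r' hrr'
      rcases eq_or_lt_of_le hrr' with h | h
      · subst h; exact le_rfl
      by_cases h1 : r = q
      · subst h1
        rw [hψdef, Function.update_self, Function.update_of_ne (ne_of_gt h)]
        exact le_trans (le_of_lt hjφq) (hmonoφ (le_of_lt h))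
      by_cases h2 : r' = q
      · subst h2
        rw [hψdef, Function.update_self, Function.update_of_ne h1]
        exact hj r h
      · rw [hψdef, Function.update_of_ne h1, Function.update_of_ne h2]
        exact hmonoφ hrr'
    have hψle : ψf ≤ φ.1 := by
      intro r
      by_cases h1 : r = q
      · subst h1; rw [hψdef, Function.update_self]; exact le_of_lt hjφq
      · rw [hψdef, Function.update_of_ne h1]
    have hψJ : ψf ∈ J := hJ2 φ.1 φ.2 ψf hψmono hψle
    set ψ : ↥J := ⟨ψf, hψJ⟩ with hψ'def
    have hψq : ψ.1 q = j := by rw [hψ'def]; simp [hψdef]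
    have hψp : ψ.1 p = φ.1 p := by
      rw [hψ'def]; exact Function.update_of_ne (ne_of_lt hpq) _ _
    have hψw : Dg ψ.1 ≤ w := by
      refine Dg_le_of_pair φ.1 ψ.1 q (fun r hr => by
        rw [hψ'def]; exact (Function.update_of_ne hr _ _).symm) w hφ ?_
      rw [hψq]; exact hwqj
    have step1 : Finsupp.single φ (monomial (w - Dg φ.1) c)
        - Finsupp.single ψ (monomial (w - Dg ψ.1) c) ∈ GS k J := by
      refine G2_step k J φ ψ q ?_ ?_ w c hφ ?_
      · rw [hψq]; exact hq
      · intro r hr; rw [hψ'def]; exact (Function.update_of_ne hr _ _).symm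
      · rw [hψq]; exact hwqj
    have step2 : Finsupp.single ψ (monomial (w - Dg ψ.1) c) ∈ GS k J := by
      have hψpne : ψ.1 p ≠ i := by rw [hψp]; exact hpe
      refine G1_mem k J ψ (p, i) (w - Dg ψ.1) c (u_pos ψ.1 w (Dg_ne ψ.1 hψpne) hwpi) ?_
      refine ⟨Finsupp.single (p, i) 1 + Finsupp.single (q, j) 1,
        Or.inr ⟨p, q, i, j, hpq, hji, rfl⟩, ?_⟩
      exact single_add_single_le_single_add_Dg ψ.1 _ _ (by rw [← hψq]; exact Dg_self ψ.1 q)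
    have h2 := add_mem step1 step2
    rwa [sub_add_cancel] at h2

noncomputable def Fmap : (↥J →₀ MvPolynomial (P × Fin n) k)
    →ₗ[MvPolynomial (P × Fin n) k] MvPolynomial (P × Fin n) k :=
  Finsupp.linearCombination _ (fun φ : ↥J => mA k (GammaF φ.1))

noncomputable def epsMap : (↥J →₀ MvPolynomial (P × Fin n) k)
    →ₗ[MvPolynomial (P × Fin n) k] (MvPolynomial (P × Fin n) k ⧸ BJ k J) :=
  Finsupp.linearCombination (MvPolynomial (P × Fin n) k)
    (fun φ : ↥J => Ideal.Quotient.mk (BJ k J) (mA k (GammaF φ.1)))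

lemma eps_eq (f : ↥J →₀ MvPolynomial (P × Fin n) k) :
    epsMap k J f = Ideal.Quotient.mk (BJ k J) (Fmap k J f) := by
  have := Finsupp.apply_linearCombination (MvPolynomial (P × Fin n) k)
    (Ideal.Quotient.mkₐ (MvPolynomial (P × Fin n) k) (BJ k J)).toLinearMap
    (fun φ : ↥J => mA k (GammaF φ.1)) f
  simp only [AlgHom.toLinearMap_apply, Ideal.Quotient.mkₐ_eq_mk] at this
  rw [epsMap, Fmap]
  exact this.symm

lemma mem_ker_iff (f : ↥J →₀ MvPolynomial (P × Fin n) k) :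
    f ∈ LinearMap.ker (epsMap k J) ↔ Fmap k J f ∈ BJ k J := by
  rw [LinearMap.mem_ker, eps_eq, Ideal.Quotient.eq_zero_iff_mem]

lemma GS_le_ker : GS k J ≤ LinearMap.ker (epsMap k J) := by
  rw [GS, Submodule.span_le]
  have hsm : ∀ r m : MvPolynomial (P × Fin n) k,
      r • (Ideal.Quotient.mk (BJ k J)) m = Ideal.Quotient.mk (BJ k J) (r * m) := by
    intro r m
    rw [← smul_eq_mul, ← Ideal.Quotient.mkₐ_eq_mk (MvPolynomial (P × Fin n) k),
      ← AlgHom.toLinearMap_apply, ← AlgHom.toLinearMap_apply, map_smul]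
  rintro v (⟨φ, p, i, hB, rfl⟩ | ⟨φ, ψ, p, hlt, hq, rfl⟩) <;>
    rw [SetLike.mem_coe, LinearMap.mem_ker]
  · rw [epsMap, Finsupp.linearCombination_single, hsm, Ideal.Quotient.eq_zero_iff_mem]
    exact hB
  · rw [map_sub, epsMap, Finsupp.linearCombination_single, Finsupp.linearCombination_single,
      hsm, hsm, X_mul_mA, X_mul_mA]
    have : Finsupp.single (p, ψ.1 p) 1 + Dg φ.1 = Finsupp.single (p, φ.1 p) 1 + Dg ψ.1 := by
      rw [add_comm, add_comm (Finsupp.single (p, φ.1 p) 1)]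
      exact Dg_pair φ.1 ψ.1 p hq
    rw [this, sub_self]

lemma coeff_F (f : ↥J →₀ MvPolynomial (P × Fin n) k) (w : (P × Fin n) →₀ ℕ) :
    coeff w (Fmap k J f)
      = ∑ φ ∈ f.support, (if Dg φ.1 ≤ w then coeff (w - Dg φ.1) (f φ) else 0) := by
  classical
  rw [Fmap, Finsupp.linearCombination_apply, Finsupp.sum, coeff_sum]
  refine Finset.sum_congr rfl fun φ _ => ?_
  rw [smul_eq_mul, mA_eq, coeff_mul_monomial']
  split
  · rw [mul_one]
  · rfl

lemma ker_le_GS (hJ1 : ∀ φ ∈ J, Monotone φ)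
    (hJ2 : ∀ φ ∈ J, ∀ ψ : P → Fin n, Monotone ψ → ψ ≤ φ → ψ ∈ J) :
    LinearMap.ker (epsMap k J) ≤ GS k J := by
  classical
  suffices H : ∀ N : ℕ, ∀ f : ↥J →₀ MvPolynomial (P × Fin n) k,
      (∑ φ ∈ f.support, (f φ).support.card) ≤ N → Fmap k J f ∈ BJ k J → f ∈ GS k J by
    intro f hf
    exact H _ f le_rfl ((mem_ker_iff k J f).1 hf)
  intro N
  induction N with
  | zero =>
    intro f hμ hF
    have hf0 : f = 0 := by
      by_contra h0
      obtain ⟨φ0, hφ0⟩ := Finsupp.support_nonempty_iff.2 h0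
      have hz := Finset.sum_eq_zero_iff.1 (Nat.le_zero.1 hμ) φ0 hφ0
      rw [Finset.card_eq_zero, MvPolynomial.support_eq_empty] at hz
      exact Finsupp.mem_support_iff.1 hφ0 hz
    rw [hf0]; exact zero_mem _
  | succ N ih =>
    intro f hμ hF
    by_cases h0 : f = 0
    · rw [h0]; exact zero_mem _
    obtain ⟨φ0, hφ0⟩ := Finsupp.support_nonempty_iff.2 h0
    have hfφ0 : (f φ0).support.Nonempty := by
      rw [Finset.nonempty_iff_ne_empty]
      intro h
      exact Finsupp.mem_support_iff.1 hφ0 (MvPolynomial.support_eq_empty.1 h)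
    obtain ⟨u0, hu0⟩ := hfφ0
    set w : (P × Fin n) →₀ ℕ := u0 + Dg φ0.1 with hwdef
    have hφ0w : Dg φ0.1 ≤ w := le_add_self
    have hwu0 : w - Dg φ0.1 = u0 := add_tsub_cancel_right u0 _
    set c : ↥J → k := fun φ => if Dg φ.1 ≤ w then coeff (w - Dg φ.1) (f φ) else 0 with hc
    set g : ↥J →₀ MvPolynomial (P × Fin n) k :=
      ∑ φ ∈ f.support, Finsupp.single φ (monomial (w - Dg φ.1) (c φ)) with hgdef
    have hg_apply : ∀ φ' : ↥J,
        g φ' = if φ' ∈ f.support then monomial (w - Dg φ'.1) (c φ') else 0 := by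
      intro φ'
      rw [hgdef, Finsupp.finset_sum_apply]
      rw [show (∑ φ ∈ f.support, Finsupp.single φ (monomial (w - Dg φ.1) (c φ)) φ')
          = ∑ φ ∈ f.support,
            (if φ = φ' then monomial (w - Dg φ.1) (c φ) else 0) from
        Finset.sum_congr rfl fun φ _ => Finsupp.single_apply]
      exact Finset.sum_ite_eq' f.support φ' _
    -- g lies in the span of the generators
    have hgGS : g ∈ GS k J := by
      rw [hgdef]
      by_cases hwB : ∃ d ∈ BgenSet J, d ≤ w
      · refine Submodule.sum_mem _ fun φ _ => ?_
        by_cases hle : Dg φ.1 ≤ w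
        · exact L1 k J hJ1 hJ2 w hwB (c φ) φ hle
        · have : c φ = 0 := by rw [hc]; exact if_neg hle
          rw [this, map_zero, Finsupp.single_zero]
          exact zero_mem _
      · have hc0 : ∑ φ ∈ f.support, c φ = 0 := by
          have h1 : coeff w (Fmap k J f) = ∑ φ ∈ f.support, c φ := by
            rw [coeff_F]
          have h2 : coeff w (Fmap k J f) = 0 := by
            rw [← MvPolynomial.notMem_support_iff]
            intro hmem
            exact hwB ((mem_BJ_iff k J _).1 hF w hmem)
          rw [h1] at h2
          exact h2
        have hgeq : (∑ φ ∈ f.support, Finsupp.single φ (monomial (w - Dg φ.1) (c φ)))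
            = ∑ φ ∈ f.support, (Finsupp.single φ (monomial (w - Dg φ.1) (c φ))
              - Finsupp.single φ0 (monomial (w - Dg φ0.1) (c φ))) := by
          rw [Finset.sum_sub_distrib]
          have : ∑ φ ∈ f.support, Finsupp.single φ0 (monomial (w - Dg φ0.1) (c φ))
              = Finsupp.single φ0 (monomial (w - Dg φ0.1) (∑ φ ∈ f.support, c φ)) := by
            rw [map_sum (monomial (w - Dg φ0.1)) c f.support, Finsupp.single_finset_sum]
          rw [this, hc0, map_zero, Finsupp.single_zero, sub_zero]
        rw [hgeq]
        refine Submodule.sum_mem _ fun φ _ => ?_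
        by_cases hle : Dg φ.1 ≤ w
        · exact walkB k J w hwB (c φ) φ φ0 hle hφ0w
        · have : c φ = 0 := by rw [hc]; exact if_neg hle
          simp only [this, map_zero, Finsupp.single_zero, sub_zero]
          exact zero_mem _
    -- the measure strictly decreases when we subtract g
    have hsupp_sub : (f - g).support ⊆ f.support := by
      intro φ' h
      rw [Finsupp.mem_support_iff] at h ⊢
      intro hz
      apply h
      rw [Finsupp.sub_apply, hz, hg_apply φ',
        if_neg (fun hmem => Finsupp.mem_support_iff.1 hmem hz), sub_zero]
    have hcard_le : ∀ φ' ∈ f.support, ((f - g) φ').support.card ≤ (f φ').support.card := by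
      intro φ' hmem
      by_cases hle : Dg φ'.1 ≤ w
      · have hsub : ((f - g) φ').support ⊆ (f φ').support.erase (w - Dg φ'.1) := by
          intro v hv
          rw [MvPolynomial.mem_support_iff] at hv
          rw [Finsupp.sub_apply, hg_apply φ', if_pos hmem] at hv
          have hcφ' : c φ' = coeff (w - Dg φ'.1) (f φ') := by rw [hc]; exact if_pos hle
          rw [Finset.mem_erase, MvPolynomial.mem_support_iff]
          by_cases hvu : w - Dg φ'.1 = v
          · exfalso
            apply hv
            rw [MvPolynomial.coeff_sub, MvPolynomial.coeff_monomial, if_pos hvu, hcφ', hvu,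
              sub_self]
          · constructor
            · exact fun h => hvu h.symm
            · intro h
              apply hv
              rw [MvPolynomial.coeff_sub, MvPolynomial.coeff_monomial, if_neg hvu, h, sub_zero]
        exact le_trans (Finset.card_le_card hsub) (Finset.card_erase_le)
      · have : c φ' = 0 := by rw [hc]; exact if_neg hle
        have : (f - g) φ' = f φ' := by
          rw [Finsupp.sub_apply, hg_apply φ', if_pos hmem, this, map_zero, sub_zero]
        rw [this]
    have hcard_lt : ((f - g) φ0).support.card < (f φ0).support.card := by
      have hsub : ((f - g) φ0).support ⊆ (f φ0).support.erase u0 := by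
        intro v hv
        rw [MvPolynomial.mem_support_iff] at hv
        rw [Finsupp.sub_apply, hg_apply φ0, if_pos hφ0] at hv
        have hcφ0 : c φ0 = coeff (w - Dg φ0.1) (f φ0) := by rw [hc]; exact if_pos hφ0w
        rw [Finset.mem_erase, MvPolynomial.mem_support_iff]
        by_cases hvu : w - Dg φ0.1 = v
        · exfalso
          apply hv
          rw [MvPolynomial.coeff_sub, MvPolynomial.coeff_monomial, if_pos hvu, hcφ0, hvu,
            sub_self]
        · constructor
          · intro h; apply hvu; rw [hwu0, h]
          · intro h
            apply hv
            rw [MvPolynomial.coeff_sub, MvPolynomial.coeff_monomial, if_neg hvu, h, sub_zero]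
      have h1 : ((f - g) φ0).support.card ≤ ((f φ0).support.erase u0).card :=
        Finset.card_le_card hsub
      have h2 : ((f φ0).support.erase u0).card = (f φ0).support.card - 1 :=
        Finset.card_erase_of_mem hu0
      have h3 : 1 ≤ (f φ0).support.card := Finset.card_pos.2 ⟨u0, hu0⟩
      omega
    have hμ' : (∑ φ ∈ (f - g).support, ((f - g) φ).support.card) ≤ N := by
      have hA : (∑ φ ∈ (f - g).support, ((f - g) φ).support.card)
          ≤ ∑ φ ∈ f.support, ((f - g) φ).support.card :=
        Finset.sum_le_sum_of_subset hsupp_sub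
      have hB : (∑ φ ∈ f.support, ((f - g) φ).support.card)
          < ∑ φ ∈ f.support, (f φ).support.card :=
        Finset.sum_lt_sum hcard_le ⟨φ0, hφ0, hcard_lt⟩
      omega
    have hF' : Fmap k J (f - g) ∈ BJ k J := by
      rw [map_sub]
      exact sub_mem hF ((mem_ker_iff k J g).1 (GS_le_ker k J hgGS))
    have hrec := ih (f - g) hμ' hF'
    have : f = (f - g) + g := (sub_add_cancel f g).symm
    rw [this]
    exact add_mem hrec hgGS

end Stmt11

theorem stmt11 (k : Type*) [Field k] {n : ℕ} (J : Set (P → Fin n))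
    (hJ1 : ∀ φ ∈ J, Monotone φ)
    (hJ2 : ∀ φ ∈ J, ∀ ψ : P → Fin n, Monotone ψ → ψ ≤ φ → ψ ∈ J)
    (hJne : J.Nonempty) :
    LinearMap.ker
        (Finsupp.linearCombination (MvPolynomial (P × Fin n) k)
          (fun φ : ↥J => Ideal.Quotient.mk (BJ k J) (mA k (GammaF φ.1)))) =
      Submodule.span (MvPolynomial (P × Fin n) k)
        ({v : ↥J →₀ MvPolynomial (P × Fin n) k |
            ∃ (φ : ↥J) (p : P) (i : Fin n),
              X (p, i) * mA k (GammaF φ.1) ∈ BJ k J ∧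
              v = Finsupp.single φ (X (p, i))} ∪
          {v : ↥J →₀ MvPolynomial (P × Fin n) k |
            ∃ (φ ψ : ↥J) (p : P),
              φ.1 p < ψ.1 p ∧ (∀ q : P, q ≠ p → φ.1 q = ψ.1 q) ∧
              v = Finsupp.single φ (X (p, ψ.1 p)) - Finsupp.single ψ (X (p, φ.1 p))}) :=
  le_antisymm (Stmt11.ker_le_GS k J hJ1 hJ2) (Stmt11.GS_le_ker k J)
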